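/- For an integer ℓ ≥ 2, an integer k with 0 ≤ k ≤ ℓ-1, and a real L with 0 < L < 2 and L ≠ k, the identity sum_{n=k}^{ℓ-1} binom(n, k) Γ(n-L)/(Γ(2-L) n!) = binom(ℓ, k) (ℓ-k) Γ(ℓ-L) / (ℓ! (k-L) Γ(2-L)) holds (interpreting Γ(n-L) via analytic continuation for n-L < 0 when needed, i.e. for n=0,1 with L>n). -/

import Mathlib

open Real

lemma gamma_telescope (L : ℝ) (hn : ∀ n : ℕ, (n : ℝ) - L ≠ 0) (k : ℕ) :
    ∀ ℓ : ℕ, k + 1 ≤ ℓ →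
      ∑ n ∈ Finset.Ico k ℓ, Gamma ((n : ℝ) - L) / ((n - k).factorial : ℝ)
        = Gamma ((ℓ : ℝ) - L) / (((ℓ - k - 1).factorial : ℝ) * ((k : ℝ) - L)) := by
  intro ℓ hℓ
  induction ℓ, hℓ using Nat.le_induction with
  | base =>
      rw [Nat.Ico_succ_singleton, Finset.sum_singleton,
        show k + 1 - k - 1 = 0 from by omega, Nat.sub_self]
      simp only [Nat.factorial_zero, Nat.cast_one, div_one, one_mul]
      push_cast
      rw [show (k : ℝ) + 1 - L = ((k : ℝ) - L) + 1 from by ring,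
        Real.Gamma_add_one (hn k)]
      exact (mul_div_cancel_left₀ _ (hn k)).symm
  | succ m hm ih =>
      rw [Finset.sum_Ico_succ_top (le_trans (Nat.le_succ k) hm), ih]
      have hkm : k ≤ m := le_trans (Nat.le_succ k) hm
      have hfac : ((m - k).factorial : ℝ) = ((m - k : ℕ) : ℝ) * ((m - k - 1).factorial : ℝ) := by
        rw [show m - k = (m - k - 1) + 1 from by omega, Nat.factorial_succ]
        push_cast
        ring
      have hsub : ((m - k : ℕ) : ℝ) = (m : ℝ) - (k : ℝ) := by
        push_cast [hkm]; ring
      have hne : ((m - k - 1).factorial : ℝ) ≠ 0 := by positivity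
      have hmk : (m : ℝ) - (k : ℝ) ≠ 0 := by
        have : (k : ℝ) + 1 ≤ (m : ℝ) := by exact_mod_cast hm
        linarith
      push_cast
      rw [show (m + 1 - k - 1 : ℕ) = m - k from by omega,
        show (m : ℝ) + 1 - L = ((m : ℝ) - L) + 1 from by ring,
        Real.Gamma_add_one (hn m), hfac, hsub]
      field_simp [hne, hmk, hn k]
      ring

/-- For an integer `ℓ ≥ 2`, an integer `k` with `0 ≤ k ≤ ℓ-1`, and a real `L`
with `0 < L < 2`, `L ≠ k` and `L ≠ 1` (so that no pole of `Γ` is hit; Mathlib's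
`Real.Gamma` is the analytic continuation away from the poles):
`∑_{n=k}^{ℓ-1} C(n,k) Γ(n-L)/(Γ(2-L) n!)
  = C(ℓ,k) (ℓ-k) Γ(ℓ-L)/(ℓ! (k-L) Γ(2-L))`. -/
theorem binom_gamma_sum_identity (ℓ k : ℕ) (hℓ : 2 ≤ ℓ) (hk : k ≤ ℓ - 1)
    (L : ℝ) (hL0 : 0 < L) (hL2 : L < 2) (hLk : L ≠ (k : ℝ)) (hL1 : L ≠ 1) :
    ∑ n ∈ Finset.Ico k ℓ,
        (n.choose k : ℝ) * Gamma ((n : ℝ) - L) / (Gamma (2 - L) * (n.factorial : ℝ))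
      = (ℓ.choose k : ℝ) * ((ℓ : ℝ) - (k : ℝ)) * Gamma ((ℓ : ℝ) - L) /
          ((ℓ.factorial : ℝ) * ((k : ℝ) - L) * Gamma (2 - L)) := by
  have hn : ∀ n : ℕ, (n : ℝ) - L ≠ 0 := by
    intro n
    match n with
    | 0 => simp; linarith
    | 1 => simp; intro h; exact hL1 (by linarith)
    | (m + 2) =>
        have : (2 : ℝ) ≤ ((m + 2 : ℕ) : ℝ) := by push_cast; linarith [Nat.cast_nonneg (α := ℝ) m]
        intro h; linarith
  have hkℓ : k + 1 ≤ ℓ := by omega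
  have hΓ2 : Gamma (2 - L) ≠ 0 := ne_of_gt (Real.Gamma_pos_of_pos (by linarith))
  have hkfac : ((k.factorial : ℝ)) ≠ 0 := by positivity
  calc ∑ n ∈ Finset.Ico k ℓ,
        (n.choose k : ℝ) * Gamma ((n : ℝ) - L) / (Gamma (2 - L) * (n.factorial : ℝ))
      = ∑ n ∈ Finset.Ico k ℓ, (Gamma (2 - L) * (k.factorial : ℝ))⁻¹ *
          (Gamma ((n : ℝ) - L) / ((n - k).factorial : ℝ)) := by
        refine Finset.sum_congr rfl fun n hnmem => ?_
        have hkn : k ≤ n := (Finset.mem_Ico.mp hnmem).1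
        have hch : (n.choose k : ℝ) ≠ 0 := by
          exact_mod_cast Nat.choose_pos hkn |>.ne'
        have hnfac : ((n.factorial : ℝ)) = (n.choose k : ℝ) * (k.factorial : ℝ) *
            (((n - k).factorial : ℝ)) := by
          exact_mod_cast congrArg (Nat.cast (R := ℝ))
            (Nat.choose_mul_factorial_mul_factorial hkn).symm
        have h2 : (((n - k).factorial : ℝ)) ≠ 0 := by positivity
        rw [hnfac]
        field_simp
    _ = (Gamma (2 - L) * (k.factorial : ℝ))⁻¹ *
          (Gamma ((ℓ : ℝ) - L) / (((ℓ - k - 1).factorial : ℝ) * ((k : ℝ) - L))) := by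
        rw [← Finset.mul_sum, gamma_telescope L hn k ℓ hkℓ]
    _ = (ℓ.choose k : ℝ) * ((ℓ : ℝ) - (k : ℝ)) * Gamma ((ℓ : ℝ) - L) /
          ((ℓ.factorial : ℝ) * ((k : ℝ) - L) * Gamma (2 - L)) := by
        have hch : (ℓ.choose k : ℝ) ≠ 0 := by
          exact_mod_cast Nat.choose_pos (by omega : k ≤ ℓ) |>.ne'
        have hℓfac : ((ℓ.factorial : ℝ)) = (ℓ.choose k : ℝ) * (k.factorial : ℝ) *
            (((ℓ - k).factorial : ℝ)) := by
          exact_mod_cast congrArg (Nat.cast (R := ℝ))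
            (Nat.choose_mul_factorial_mul_factorial (by omega : k ≤ ℓ)).symm
        have hfac2 : (((ℓ - k).factorial : ℝ)) = ((ℓ : ℝ) - (k : ℝ)) *
            (((ℓ - k - 1).factorial : ℝ)) := by
          rw [show ℓ - k = (ℓ - k - 1) + 1 from by omega, Nat.factorial_succ]
          push_cast [show k ≤ ℓ from by omega]
          ring_nf
          rw [show (ℓ - k - 1 : ℕ) = ℓ - (k + 1) from by omega]
          push_cast [show k + 1 ≤ ℓ from hkℓ]
          ring
        have h3 : (((ℓ - k - 1).factorial : ℝ)) ≠ 0 := by positivity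
        have hℓk : (ℓ : ℝ) - (k : ℝ) ≠ 0 := by
          have : (k : ℝ) + 1 ≤ (ℓ : ℝ) := by exact_mod_cast hkℓ
          linarith
        rw [hℓfac, hfac2]
        field_simp [hn k]
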